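/- For coprime positive integers m, n there exists a constant B such that for all x ≥ 2, Σ_{p ≤ x, p ≡ n (mod m)} 1/p = (log log x)/φ(m) + B + O(1/log x), where the sum is over primes p. -/

import Mathlib

open Real Filter Finset

/-- The finset of primes `p ≤ x` with `p ≡ n (mod m)`. -/
noncomputable def primesTo (x : ℝ) (m n : ℕ) : Finset ℕ :=
  (Finset.range (⌊x⌋₊ + 1)).filter fun p => p.Prime ∧ p % m = n % m

/-- `π(x; m, n)`, the number of primes `p ≤ x` with `p ≡ n (mod m)`. -/
noncomputable def piCount (x : ℝ) (m n : ℕ) : ℝ := (primesTo x m n).card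

/-- `π_k(x; m, n) = Σ_{p ≤ x, p ≡ n (mod m)} p^k`. -/
noncomputable def piPow (k x : ℝ) (m n : ℕ) : ℝ :=
  ∑ p ∈ primesTo x m n, (p : ℝ) ^ k

open MeasureTheory

noncomputable def Tm (m n : ℕ) (t : ℝ) : ℝ := ∑ p ∈ primesTo t m n, Real.log p / p

lemma Tm_nonneg (m n : ℕ) (t : ℝ) : 0 ≤ Tm m n t := by
  apply Finset.sum_nonneg
  intro p hp
  have hp' : p.Prime := (Finset.mem_filter.mp hp).2.1
  have h1 : (1:ℝ) ≤ p := by exact_mod_cast hp'.one_lt.le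
  exact div_nonneg (Real.log_nonneg h1) (by linarith)

lemma Tm_mono (m n : ℕ) : Monotone (Tm m n) := by
  intro s t hst
  apply Finset.sum_le_sum_of_subset_of_nonneg
  · apply Finset.filter_subset_filter
    exact Finset.range_subset_range.mpr (by have := Nat.floor_le_floor hst; omega)
  · intro p hp _
    have hp' : p.Prime := (Finset.mem_filter.mp hp).2.1
    have h1 : (1:ℝ) ≤ p := by exact_mod_cast hp'.one_lt.le
    exact div_nonneg (Real.log_nonneg h1) (by linarith)

lemma Tm_zero (m n : ℕ) {t : ℝ} (ht : t < 2) : Tm m n t = 0 := by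
  apply Finset.sum_eq_zero
  intro p hp
  rw [primesTo, Finset.mem_filter, Finset.mem_range] at hp
  exfalso
  have h2 : 2 ≤ p := hp.2.1.two_le
  have hf : ⌊t⌋₊ ≤ 1 := by
    by_cases h0 : 0 ≤ t
    · exact Nat.lt_succ_iff.mp ((Nat.floor_lt h0).mpr (by norm_num; linarith))
    · simp [Nat.floor_of_nonpos (le_of_not_ge h0)]
  omega

lemma gg_meas : Measurable fun t : ℝ => 1 / (t * Real.log t ^ 2) :=
  measurable_const.div ((measurable_id.mul (Real.measurable_log.pow_const 2)))

lemma hasDerivAt_negInvLog {t : ℝ} (ht : 1 < t) :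
    HasDerivAt (fun u : ℝ => -(Real.log u)⁻¹) (1 / (t * Real.log t ^ 2)) t := by
  have h0 : t ≠ 0 := by linarith
  have hl : Real.log t ≠ 0 := (Real.log_pos ht).ne'
  have h := ((Real.hasDerivAt_log h0).inv hl).neg
  exact h.congr_deriv (by field_simp)

lemma negInvLog_tendsto : Tendsto (fun u : ℝ => -(Real.log u)⁻¹) atTop (nhds 0) := by
  have h2 := Real.tendsto_log_atTop.inv_tendsto_atTop.neg
  rw [neg_zero] at h2
  exact h2

lemma gg_integrable_tail (x : ℝ) (hx : 2 ≤ x) :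
    IntegrableOn (fun t : ℝ => 1 / (t * Real.log t ^ 2)) (Set.Ioi x) := by
  apply integrableOn_Ioi_deriv_of_nonneg
    ((hasDerivAt_negInvLog (t := x) (by linarith)).continuousAt.continuousWithinAt)
    (fun t ht => hasDerivAt_negInvLog (by simp only [Set.mem_Ioi] at ht; linarith))
    _ negInvLog_tendsto
  intro t ht
  simp only [Set.mem_Ioi] at ht
  have h1 : 0 < Real.log t := Real.log_pos (by linarith)
  have h0 : (0:ℝ) < t := by linarith
  positivity

lemma integral_gg_tail (x : ℝ) (hx : 2 ≤ x) :
    ∫ t in Set.Ioi x, 1 / (t * Real.log t ^ 2) = 1 / Real.log x := by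
  rw [integral_Ioi_of_hasDerivAt_of_tendsto
    ((hasDerivAt_negInvLog (t := x) (by linarith)).continuousAt.continuousWithinAt)
    (fun t ht => hasDerivAt_negInvLog (by simp only [Set.mem_Ioi] at ht; linarith))
    (gg_integrable_tail x hx) negInvLog_tendsto]
  simp [one_div]

lemma integral_loglog (x : ℝ) (hx : 2 ≤ x) :
    ∫ t in Set.Ioc 2 x, 1 / (t * Real.log t) =
      Real.log (Real.log x) - Real.log (Real.log 2) := by
  rw [← intervalIntegral.integral_of_le hx]
  apply intervalIntegral.integral_eq_sub_of_hasDerivAt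
  · intro t ht
    rw [Set.uIcc_of_le hx] at ht
    obtain ⟨ht1, _⟩ := ht
    have h0 : t ≠ 0 := by norm_num; linarith
    have hl : Real.log t ≠ 0 := (Real.log_pos (by linarith)).ne'
    have h := (Real.hasDerivAt_log hl).comp t (Real.hasDerivAt_log h0)
    exact h.congr_deriv (by field_simp)
  · apply ContinuousOn.intervalIntegrable
    rw [Set.uIcc_of_le hx]
    apply ContinuousOn.div continuousOn_const
    · exact continuousOn_id.mul (Real.continuousOn_log.mono (by
        intro t ht
        simp only [Set.mem_Icc] at ht
        simp only [Set.mem_compl_iff, Set.mem_singleton_iff]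
        intro h; rw [h] at ht; linarith [ht.1]))
    · intro t ht
      simp only [Set.mem_Icc] at ht
      have h1 : 0 < Real.log t := Real.log_pos (by linarith [ht.1])
      have h0 : 0 < t := by linarith [ht.1]
      positivity

lemma integrableOn_Tg (m n : ℕ) {a b : ℝ} (ha : 1 < a) :
    IntegrableOn (fun t => Tm m n t * (1 / (t * Real.log t ^ 2))) (Set.Ioc a b) := by
  rcases le_or_gt b a with h | h
  · rw [Set.Ioc_eq_empty (by exact fun hh => absurd hh (not_lt.mpr h))]
    exact integrableOn_empty
  apply MeasureTheory.Integrable.mono'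
    (g := fun _ => Tm m n b * (1 / (a * Real.log a ^ 2)))
    (integrableOn_const measure_Ioc_lt_top.ne)
  · exact (((Tm_mono m n).measurable.mul gg_meas).aestronglyMeasurable).restrict
  · rw [ae_restrict_iff' measurableSet_Ioc]
    refine Filter.Eventually.of_forall (fun t ht => ?_)
    obtain ⟨ht1, ht2⟩ := ht
    have ha0 : (0:ℝ) < a := by linarith
    have hla : 0 < Real.log a := Real.log_pos ha
    have hlt : 0 < Real.log t := Real.log_pos (by linarith)
    have ht0 : (0:ℝ) < t := by linarith
    have hgt : (0:ℝ) < t * Real.log t ^ 2 := by positivity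
    have hga : (0:ℝ) < a * Real.log a ^ 2 := by positivity
    have hTt : 0 ≤ Tm m n t := Tm_nonneg m n t
    rw [Real.norm_eq_abs, abs_of_nonneg (by positivity)]
    apply mul_le_mul (Tm_mono m n ht2)
    · apply one_div_le_one_div_of_le hga
      have h1 : Real.log a ≤ Real.log t := Real.log_le_log ha0 ht1.le
      have h2 : Real.log a ^ 2 ≤ Real.log t ^ 2 := by nlinarith
      nlinarith
    · positivity
    · exact Tm_nonneg m n b

lemma sum_c_eq (m n : ℕ) (t : ℝ) :
    ∑ k ∈ Finset.Icc 0 ⌊t⌋₊,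
      (if Nat.Prime k ∧ k % m = n % m then Real.log k / k else 0) = Tm m n t := by
  rw [← Finset.Ico_add_one_right_eq_Icc, Nat.Ico_zero_eq_range, Tm, primesTo, Finset.sum_filter]

lemma abel_key (m n : ℕ) (x : ℝ) (hx : 2 ≤ x) :
    ∑ p ∈ primesTo x m n, 1 / (p : ℝ) =
      Tm m n x / Real.log x +
        ∫ t in Set.Ioc 2 x, Tm m n t * (1 / (t * Real.log t ^ 2)) := by
  set c : ℕ → ℝ := fun k => if Nat.Prime k ∧ k % m = n % m then Real.log k / k else 0 with hc
  set f : ℝ → ℝ := fun t => (Real.log t)⁻¹ with hf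
  have hd : ∀ t ∈ Set.Icc (3/2 : ℝ) x, HasDerivAt f (-(1 / (t * Real.log t ^ 2))) t := by
    intro t ht
    obtain ⟨ht1, _⟩ := ht
    have h0 : t ≠ 0 := by norm_num; linarith
    have hl : Real.log t ≠ 0 := (Real.log_pos (by linarith)).ne'
    have h := (Real.hasDerivAt_log h0).inv hl
    exact h.congr_deriv (by field_simp)
  have hf_diff : ∀ t ∈ Set.Icc (3/2 : ℝ) x, DifferentiableAt ℝ f t :=
    fun t ht => (hd t ht).differentiableAt
  have hcont : ContinuousOn (fun t : ℝ => -(1 / (t * Real.log t ^ 2)))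
      (Set.Icc (3/2 : ℝ) x) := by
    apply ContinuousOn.neg
    apply ContinuousOn.div continuousOn_const
    · exact continuousOn_id.mul ((Real.continuousOn_log.mono (by
        intro t ht
        simp only [Set.mem_Icc] at ht
        simp only [Set.mem_compl_iff, Set.mem_singleton_iff]
        intro h; rw [h] at ht; linarith [ht.1])).pow 2)
    · intro t ht
      simp only [Set.mem_Icc] at ht
      have h1 : 0 < Real.log t := Real.log_pos (by linarith [ht.1])
      have h0 : 0 < t := by linarith [ht.1]
      positivity
  have hf_int : IntegrableOn (deriv f) (Set.Icc (3/2 : ℝ) x) := by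
    apply IntegrableOn.congr_fun (hcont.integrableOn_Icc)
      (fun t ht => ((hd t ht).deriv).symm) measurableSet_Icc
  have key := sum_mul_eq_sub_sub_integral_mul c (a := 3/2) (b := x)
    (by norm_num) (by linarith) hf_diff hf_int
  have hfl32 : ⌊(3/2 : ℝ)⌋₊ = 1 := by
    rw [Nat.floor_eq_iff (by norm_num)]; norm_num
  rw [hfl32] at key
  -- LHS equals sum over primesTo
  have hL : ∑ k ∈ Finset.Ioc 1 ⌊x⌋₊, f k * c k = ∑ p ∈ primesTo x m n, 1 / (p : ℝ) := by
    rw [primesTo, Finset.sum_filter]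
    rw [Finset.sum_subset (h := fun k hk => ?_) (hf := fun k hk hk2 => ?_)]
    · apply Finset.sum_congr rfl
      intro k hk
      by_cases hkp : Nat.Prime k ∧ k % m = n % m
      · rw [if_pos hkp, hc]
        simp only [if_pos hkp, hf]
        have h2 : 2 ≤ k := hkp.1.two_le
        have hl : Real.log k ≠ 0 := by
          apply (Real.log_pos (by exact_mod_cast h2.trans' (by norm_num))).ne'
        field_simp
      · rw [if_neg hkp, hc]
        simp only [if_neg hkp, hf, mul_zero]
    · rw [Finset.mem_range]
      rw [Finset.mem_Ioc] at hk
      omega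
    · rw [Finset.mem_range] at hk
      rw [Finset.mem_Ioc, not_and_or] at hk2
      have hk1 : k ≤ 1 := by omega
      have : c k = 0 := by
        rw [hc]
        have : ¬ Nat.Prime k := by
          interval_cases k <;> norm_num
        simp [this]
      rw [this, mul_zero]
  rw [hL] at key
  rw [key, sum_c_eq m n x]
  have h32 : ∑ k ∈ Finset.Icc 0 1, c k = 0 := by
    have h := sum_c_eq m n (3/2)
    rw [hfl32] at h
    rw [h, Tm_zero m n (by norm_num)]
  rw [h32, mul_zero, sub_zero]
  have hint_congr : ∫ t in Set.Ioc (3/2 : ℝ) x, deriv f t * (∑ k ∈ Finset.Icc 0 ⌊t⌋₊, c k) =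
      ∫ t in Set.Ioc (3/2 : ℝ) x, -(Tm m n t * (1 / (t * Real.log t ^ 2))) := by
    apply MeasureTheory.setIntegral_congr_fun measurableSet_Ioc
    intro t ht
    obtain ⟨ht1, ht2⟩ := ht
    dsimp only
    rw [(hd t ⟨ht1.le, ht2⟩).deriv, sum_c_eq m n t]
    ring
  rw [hint_congr, MeasureTheory.integral_neg]
  have hsplit : ∫ t in Set.Ioc (3/2 : ℝ) x, Tm m n t * (1 / (t * Real.log t ^ 2)) =
      (∫ t in Set.Ioc (3/2 : ℝ) 2, Tm m n t * (1 / (t * Real.log t ^ 2))) +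
      ∫ t in Set.Ioc (2 : ℝ) x, Tm m n t * (1 / (t * Real.log t ^ 2)) := by
    rw [← MeasureTheory.setIntegral_union (Set.Ioc_disjoint_Ioc_of_le le_rfl) measurableSet_Ioc
      (integrableOn_Tg m n (by norm_num)) (integrableOn_Tg m n (by norm_num)),
      Set.Ioc_union_Ioc_eq_Ioc (by norm_num) hx]
  have hzero : ∫ t in Set.Ioc (3/2 : ℝ) 2, Tm m n t * (1 / (t * Real.log t ^ 2)) = 0 := by
    rw [← MeasureTheory.Measure.restrict_congr_set MeasureTheory.Ioo_ae_eq_Ioc]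
    have hEq : Set.EqOn (fun t : ℝ => Tm m n t * (1 / (t * Real.log t ^ 2)))
        (fun _ => (0:ℝ)) (Set.Ioo (3/2 : ℝ) 2) := fun t ht => by
      dsimp only
      rw [Tm_zero m n ht.2, zero_mul]
    rw [MeasureTheory.setIntegral_congr_fun measurableSet_Ioo hEq]
    simp
  rw [hsplit, hzero, zero_add, hf]
  ring

lemma integrableOn_Rg (m n : ℕ) (φ C₀ : ℝ)
    (hC : ∀ t : ℝ, 2 ≤ t → |Tm m n t - Real.log t / φ| ≤ C₀) (x : ℝ) (hx : 2 ≤ x) :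
    IntegrableOn (fun t => (Tm m n t - Real.log t / φ) * (1 / (t * Real.log t ^ 2)))
      (Set.Ioi x) := by
  apply MeasureTheory.Integrable.mono'
    ((gg_integrable_tail x hx).const_mul C₀)
  · exact ((((Tm_mono m n).measurable.sub
      (Real.measurable_log.div_const φ)).mul gg_meas).aestronglyMeasurable).restrict
  · rw [ae_restrict_iff' measurableSet_Ioi]
    refine Filter.Eventually.of_forall (fun t ht => ?_)
    simp only [Set.mem_Ioi] at ht
    have ht2 : (2:ℝ) ≤ t := by linarith
    have hlt : 0 < Real.log t := Real.log_pos (by linarith)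
    have ht0 : (0:ℝ) < t := by linarith
    have hg0 : (0:ℝ) ≤ 1 / (t * Real.log t ^ 2) := by positivity
    rw [Real.norm_eq_abs, abs_mul, abs_of_nonneg hg0]
    exact mul_le_mul_of_nonneg_right (hC t ht2) hg0

lemma tail_bound (m n : ℕ) (φ C₀ : ℝ)
    (hC : ∀ t : ℝ, 2 ≤ t → |Tm m n t - Real.log t / φ| ≤ C₀) (x : ℝ) (hx : 2 ≤ x) :
    |∫ t in Set.Ioi x, (Tm m n t - Real.log t / φ) * (1 / (t * Real.log t ^ 2))| ≤
      C₀ / Real.log x := by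
  have h := MeasureTheory.norm_integral_le_of_norm_le
    (f := fun t => (Tm m n t - Real.log t / φ) * (1 / (t * Real.log t ^ 2)))
    (g := fun t => C₀ * (1 / (t * Real.log t ^ 2)))
    ((gg_integrable_tail x hx).const_mul C₀) ?_
  · rw [Real.norm_eq_abs] at h
    calc _ ≤ ∫ t in Set.Ioi x, C₀ * (1 / (t * Real.log t ^ 2)) := h
    _ = C₀ / Real.log x := by
        rw [MeasureTheory.integral_const_mul, integral_gg_tail x hx]
        ring
  · rw [ae_restrict_iff' measurableSet_Ioi]
    refine Filter.Eventually.of_forall (fun t ht => ?_)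
    simp only [Set.mem_Ioi] at ht
    have ht2 : (2:ℝ) ≤ t := by linarith
    have hlt : 0 < Real.log t := Real.log_pos (by linarith)
    have ht0 : (0:ℝ) < t := by linarith
    have hg0 : (0:ℝ) ≤ 1 / (t * Real.log t ^ 2) := by positivity
    rw [Real.norm_eq_abs, abs_mul, abs_of_nonneg hg0]
    exact mul_le_mul_of_nonneg_right (hC t ht2) hg0

theorem stmt_5 (m n : ℕ) (hm : 0 < m) (hn : 0 < n) (hmn : Nat.Coprime m n)
    (hMertens : ∃ C : ℝ, ∀ x : ℝ, 2 ≤ x →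
      |(∑ p ∈ primesTo x m n, Real.log p / p) - Real.log x / (Nat.totient m : ℝ)| ≤ C) :
    ∃ B C : ℝ, ∀ x : ℝ, 2 ≤ x →
      |(∑ p ∈ primesTo x m n, 1 / (p : ℝ)) -
        (Real.log (Real.log x) / (Nat.totient m : ℝ) + B)| ≤ C / Real.log x := by
  obtain ⟨C₀, hC₀⟩ := hMertens
  set φ : ℝ := (Nat.totient m : ℝ) with hφdef
  have hφ : 0 < φ := by
    have h := Nat.totient_pos.mpr hm
    rw [hφdef]
    exact_mod_cast h
  have hC : ∀ t : ℝ, 2 ≤ t → |Tm m n t - Real.log t / φ| ≤ C₀ := fun t ht => hC₀ t ht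
  set R : ℝ → ℝ := fun t => Tm m n t - Real.log t / φ with hR
  set I : ℝ := ∫ t in Set.Ioi 2, R t * (1 / (t * Real.log t ^ 2)) with hI
  refine ⟨1/φ - Real.log (Real.log 2) / φ + I, 2 * C₀, fun x hx => ?_⟩
  have hlogx : 0 < Real.log x := Real.log_pos (by linarith)
  -- split the main integral
  have hint1 : IntegrableOn (fun t => Real.log t / φ * (1 / (t * Real.log t ^ 2)))
      (Set.Ioc 2 x) := by
    apply IntegrableOn.mono_set (t := Set.Icc 2 x) _ Set.Ioc_subset_Icc_self
    apply ContinuousOn.integrableOn_Icc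
    apply ContinuousOn.mul
    · exact ContinuousOn.div_const (Real.continuousOn_log.mono (by
        intro t ht
        simp only [Set.mem_Icc] at ht
        simp only [Set.mem_compl_iff, Set.mem_singleton_iff]
        intro h; rw [h] at ht; linarith [ht.1])) φ
    · apply ContinuousOn.div continuousOn_const
      · exact continuousOn_id.mul ((Real.continuousOn_log.mono (by
          intro t ht
          simp only [Set.mem_Icc] at ht
          simp only [Set.mem_compl_iff, Set.mem_singleton_iff]
          intro h; rw [h] at ht; linarith [ht.1])).pow 2)
      · intro t ht
        simp only [Set.mem_Icc] at ht
        have h1 : 0 < Real.log t := Real.log_pos (by linarith [ht.1])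
        have h0 : 0 < t := by linarith [ht.1]
        positivity
  have hint2 : IntegrableOn (fun t => R t * (1 / (t * Real.log t ^ 2))) (Set.Ioc 2 x) :=
    (integrableOn_Rg m n φ C₀ hC 2 le_rfl).mono_set Set.Ioc_subset_Ioi_self
  have hsplit : ∫ t in Set.Ioc 2 x, Tm m n t * (1 / (t * Real.log t ^ 2)) =
      (∫ t in Set.Ioc 2 x, Real.log t / φ * (1 / (t * Real.log t ^ 2))) +
      ∫ t in Set.Ioc 2 x, R t * (1 / (t * Real.log t ^ 2)) := by
    rw [← MeasureTheory.integral_add hint1 hint2]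
    apply MeasureTheory.setIntegral_congr_fun measurableSet_Ioc
    intro t _
    dsimp only [hR]
    ring
  have hmain : ∫ t in Set.Ioc 2 x, Real.log t / φ * (1 / (t * Real.log t ^ 2)) =
      (Real.log (Real.log x) - Real.log (Real.log 2)) / φ := by
    have hEq : Set.EqOn (fun t : ℝ => Real.log t / φ * (1 / (t * Real.log t ^ 2)))
        (fun t : ℝ => (1/φ) * (1 / (t * Real.log t))) (Set.Ioc 2 x) := by
      intro t ht
      obtain ⟨ht1, _⟩ := ht
      have hlt : Real.log t ≠ 0 := (Real.log_pos (by linarith)).ne'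
      have ht0 : t ≠ 0 := by norm_num; linarith
      dsimp only
      field_simp
    rw [MeasureTheory.setIntegral_congr_fun measurableSet_Ioc hEq,
      MeasureTheory.integral_const_mul, integral_loglog x hx]
    ring
  have htail : ∫ t in Set.Ioc 2 x, R t * (1 / (t * Real.log t ^ 2)) =
      I - ∫ t in Set.Ioi x, R t * (1 / (t * Real.log t ^ 2)) := by
    have hu := MeasureTheory.setIntegral_union (Set.Ioc_disjoint_Ioi le_rfl)
      measurableSet_Ioi hint2 (integrableOn_Rg m n φ C₀ hC x hx)
    rw [Set.Ioc_union_Ioi_eq_Ioi hx] at hu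
    rw [hI, hu]
    ring
  have hTx : Tm m n x / Real.log x = 1/φ + R x / Real.log x := by
    rw [hR]
    dsimp only
    field_simp
    ring
  have hkey : (∑ p ∈ primesTo x m n, 1 / (p : ℝ)) -
      (Real.log (Real.log x) / φ + (1/φ - Real.log (Real.log 2) / φ + I)) =
      R x / Real.log x - ∫ t in Set.Ioi x, R t * (1 / (t * Real.log t ^ 2)) := by
    rw [abel_key m n x hx, hsplit, hmain, htail, hTx]
    ring
  rw [hkey]
  have h1 : |R x / Real.log x| ≤ C₀ / Real.log x := by
    rw [abs_div, abs_of_pos hlogx, div_le_div_iff_of_pos_right hlogx]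
    exact hC x hx
  have h2 := tail_bound m n φ C₀ hC x hx
  calc |R x / Real.log x - ∫ t in Set.Ioi x, R t * (1 / (t * Real.log t ^ 2))|
      ≤ |R x / Real.log x| + |∫ t in Set.Ioi x, R t * (1 / (t * Real.log t ^ 2))| :=
        abs_sub _ _
    _ ≤ C₀ / Real.log x + C₀ / Real.log x := add_le_add h1 h2
    _ = 2 * C₀ / Real.log x := by ring
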